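/- Suppose in addition to the setting of the coarse descent lemma that the nonsmooth coherence condition holds: I_h^H ∂G(x) ⊆ ∂G_H(ζ⁰), where I_h^H ∈ L(X; X_H) with adjoint (I_h^H)* = μ I_H^h for μ > 0. Let F : X → ℝ be convex differentiable and set d := I_H^h(ζ^m − ζ⁰), where ζ^m is produced by m coarse forward-backward steps with w := I_h^H ∇F(x) − ∇F_H(ζ⁰). Then sup_{g ∈ ∂G(x)} ⟨g + ∇F(x), d⟩ ≤ −(ε/(2μτ_H)) Σ_{j=0}^{m−1} ‖ζ^{j+1} − ζ^j‖² ≤ 0. -/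

import Mathlib

open RealInnerProductSpace

/-- `G` is proper, convex and lower semicontinuous as an extended-real-valued function. -/
def ProperConvexLsc {X : Type*} [NormedAddCommGroup X] [InnerProductSpace ℝ X]
    (G : X → EReal) : Prop :=
  (∃ x, G x ≠ ⊤) ∧ (∀ x, G x ≠ ⊥) ∧
  (∀ x y : X, ∀ a b : ℝ, 0 ≤ a → 0 ≤ b → a + b = 1 →
    G (a • x + b • y) ≤ (a : EReal) * G x + (b : EReal) * G y) ∧
  LowerSemicontinuous G

/-- `p` is the proximal point `prox_{τG}(x)`. -/
def IsProx {X : Type*} [NormedAddCommGroup X] [InnerProductSpace ℝ X]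
    (τ : ℝ) (G : X → EReal) (x p : X) : Prop :=
  ∀ z : X, G p + ((‖p - x‖ ^ 2 / (2 * τ) : ℝ) : EReal)
    ≤ G z + ((‖z - x‖ ^ 2 / (2 * τ) : ℝ) : EReal)

/-- The (convex) subdifferential of an extended-real-valued function. -/
def ESubdiff {X : Type*} [NormedAddCommGroup X] [InnerProductSpace ℝ X]
    (G : X → EReal) (x : X) : Set X :=
  {g : X | ∀ y : X, G x + ((⟪g, y - x⟫ : ℝ) : EReal) ≤ G y}

section Helpers

variable {E : Type*} [NormedAddCommGroup E] [InnerProductSpace ℝ E] [CompleteSpace E]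

private lemma line_deriv' {g : E → ℝ} {q v : E} {t : ℝ} {u : E}
    (hg : HasGradientAt g u (q + t • v)) :
    HasDerivAt (fun s : ℝ => g (q + s • v)) ⟪u, v⟫ t := by
  have hline : HasDerivAt (fun s : ℝ => q + s • v) v t := by
    simpa using ((hasDerivAt_id t).smul_const v).const_add q
  have h := hg.hasFDerivAt.comp_hasDerivAt t hline
  simp only [InnerProductSpace.toDual_apply_apply] at h
  exact h

private lemma grad_ineq' {F : E → ℝ} {f : E → E}
    (hF : ConvexOn ℝ Set.univ F) (hf : ∀ y, HasGradientAt F (f y) y) (q p : E) :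
    F q + ⟪f q, p - q⟫ ≤ F p := by
  have hd : HasDerivAt (fun s : ℝ => F (q + s • (p - q))) ⟪f q, p - q⟫ 0 := by
    have := line_deriv' (g := F) (q := q) (v := p - q) (t := 0) (by simpa using hf q)
    simpa using this
  have htend : Filter.Tendsto (slope (fun s : ℝ => F (q + s • (p - q))) 0)
      (nhdsWithin 0 (Set.Ioi 0)) (nhds ⟪f q, p - q⟫) :=
    (hasDerivAt_iff_tendsto_slope.mp hd).mono_left
      (nhdsWithin_mono 0 fun t ht => by simpa using (ht : (0:ℝ) < t).ne')
  have hev : ∀ᶠ t in nhdsWithin (0:ℝ) (Set.Ioi 0),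
      slope (fun s : ℝ => F (q + s • (p - q))) 0 t ≤ F p - F q := by
    filter_upwards [Ioo_mem_nhdsGT_of_mem (Set.mem_Ico.mpr ⟨le_refl (0:ℝ), one_pos⟩)] with t ht
    have hconv := hF.2 (Set.mem_univ q) (Set.mem_univ p)
      (by linarith [ht.2] : (0:ℝ) ≤ 1 - t) ht.1.le (by ring)
    have heq : q + t • (p - q) = (1 - t) • q + t • p := by module
    rw [slope_def_field]
    simp only [zero_smul, add_zero, sub_zero, heq]
    rw [div_le_iff₀ ht.1]
    simp only [smul_eq_mul] at hconv
    nlinarith [hconv]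
  have := le_of_tendsto htend hev
  linarith

private lemma grad_ineq_of_mono' {g : E → ℝ} {Φ : E → E}
    (hg : ∀ y, HasGradientAt g (Φ y) y)
    (hmono : ∀ u v : E, 0 ≤ ⟪Φ u - Φ v, u - v⟫) (q p : E) :
    g q + ⟪Φ q, p - q⟫ ≤ g p := by
  set v := p - q with hv
  have hder : ∀ t : ℝ, HasDerivAt (fun s : ℝ => g (q + s • v)) ⟪Φ (q + t • v), v⟫ t :=
    fun t => line_deriv' (hg _)
  have hcont : ContinuousOn (fun s : ℝ => g (q + s • v)) (Set.Icc 0 1) :=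
    fun t _ => ((hder t).continuousAt).continuousWithinAt
  obtain ⟨c, hc, hceq⟩ := exists_hasDerivAt_eq_slope (fun s => g (q + s • v))
    (fun t => ⟪Φ (q + t • v), v⟫) one_pos hcont (fun t _ => hder t)
  have h0 : (0:ℝ) ≤ ⟪Φ (q + c • v) - Φ q, (q + c • v) - q⟫ := hmono _ _
  have hsimp : (q + c • v) - q = c • v := by abel
  rw [hsimp, inner_sub_left, real_inner_smul_right, real_inner_smul_right] at h0
  have hc0 : 0 < c := hc.1
  have h1 : ⟪Φ q, v⟫ ≤ ⟪Φ (q + c • v), v⟫ := by nlinarith [h0]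
  have he1 : q + (1:ℝ) • v = p := by rw [one_smul, hv]; abel
  have he0 : q + (0:ℝ) • v = q := by simp
  rw [he1, he0] at hceq
  simp only [sub_zero, div_one] at hceq
  linarith [hceq ▸ h1]

private lemma descent_lemma' {F : E → ℝ} {f : E → E} {L : ℝ}
    (hgrad : ∀ y, HasGradientAt F (f y) y)
    (hlip : ∀ y y', ‖f y - f y'‖ ≤ L * ‖y - y'‖) (q p : E) :
    F p ≤ F q + ⟪f q, p - q⟫ + L / 2 * ‖p - q‖ ^ 2 := by
  have hmonoF : ∀ u v : E, ⟪f u - f v, u - v⟫ ≤ L * ‖u - v‖ ^ 2 := by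
    intro u v
    calc ⟪f u - f v, u - v⟫ ≤ ‖f u - f v‖ * ‖u - v‖ := real_inner_le_norm _ _
    _ ≤ (L * ‖u - v‖) * ‖u - v‖ := mul_le_mul_of_nonneg_right (hlip u v) (norm_nonneg _)
    _ = L * ‖u - v‖ ^ 2 := by ring
  have hg : ∀ y : E, HasGradientAt (fun x => L / 2 * ⟪x, x⟫ - F x) (L • y - f y) y := by
    intro y
    have h1 : HasGradientAt (fun x : E => L / 2 * ⟪x, x⟫) (L • y) y := by
      rw [hasGradientAt_iff_hasFDerivAt]
      have h2 := ((hasFDerivAt_id y).inner ℝ (hasFDerivAt_id y)).const_mul (L / 2)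
      refine h2.congr_fderiv ?_
      ext v
      simp [InnerProductSpace.toDual_apply_apply, fderivInnerCLM_apply, real_inner_smul_left,
        real_inner_comm v y]
      ring
    rw [hasGradientAt_iff_hasFDerivAt, map_sub]
    exact h1.hasFDerivAt.sub (hgrad y).hasFDerivAt
  have hmono : ∀ u v : E, 0 ≤ ⟪(L • u - f u) - (L • v - f v), u - v⟫ := by
    intro u v
    have he : (L • u - f u) - (L • v - f v) = L • (u - v) - (f u - f v) := by module
    rw [he, inner_sub_left, real_inner_smul_left, real_inner_self_eq_norm_sq]
    linarith [hmonoF u v]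
  have key := grad_ineq_of_mono' hg hmono q p
  have e1 : ⟪L • q - f q, p - q⟫ = L * ⟪q, p⟫ - L * ⟪q, q⟫ - ⟪f q, p - q⟫ := by
    rw [inner_sub_left, real_inner_smul_left, inner_sub_right]; ring
  have e2 : ‖p - q‖ ^ 2 = ⟪p, p⟫ - 2 * ⟪q, p⟫ + ⟪q, q⟫ := by
    rw [← real_inner_self_eq_norm_sq, inner_sub_left, inner_sub_right, inner_sub_right,
      real_inner_comm p q]
    ring
  rw [e1] at key
  rw [e2]
  ring_nf at key ⊢
  linarith [key]

omit [CompleteSpace E] in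
private lemma comb_norm_sq' (a : ℝ) (u v : E) :
    ‖a • u + (1 - a) • v‖ ^ 2
      = a * ‖u‖ ^ 2 + (1 - a) * ‖v‖ ^ 2 - a * (1 - a) * ‖u - v‖ ^ 2 := by
  simp only [← real_inner_self_eq_norm_sq, inner_add_left, inner_add_right, inner_sub_left,
    inner_sub_right, real_inner_smul_left, real_inner_smul_right, real_inner_comm v u]
  ring

omit [CompleteSpace E] in
private lemma prox_strong' {τ : ℝ} (hτ : 0 < τ) {GH : E → EReal}
    (hconv : ∀ x y : E, ∀ a b : ℝ, 0 ≤ a → 0 ≤ b → a + b = 1 →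
      GH (a • x + b • y) ≤ (a : EReal) * GH x + (b : EReal) * GH y)
    {y p z : E} (hp : IsProx τ GH y p) {gp gz : ℝ}
    (hgp : GH p = (gp : EReal)) (hgz : GH z = (gz : EReal)) :
    gp + ‖p - y‖ ^ 2 / (2 * τ) + ‖z - p‖ ^ 2 / (2 * τ) ≤ gz + ‖z - y‖ ^ 2 / (2 * τ) := by
  have key : ∀ a : ℝ, 0 < a → a ≤ 1 →
      gp + ‖p - y‖ ^ 2 / (2 * τ) + (1 - a) * (‖z - p‖ ^ 2 / (2 * τ))
        ≤ gz + ‖z - y‖ ^ 2 / (2 * τ) := by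
    intro a ha ha1
    have hGHa := hconv z p a (1 - a) ha.le (by linarith) (by ring)
    have hprox := hp (a • z + (1 - a) • p)
    rw [hgp] at hprox
    rw [hgp, hgz, ← EReal.coe_mul, ← EReal.coe_mul, ← EReal.coe_add] at hGHa
    have hchain := le_trans hprox (add_le_add_left hGHa _)
    rw [← EReal.coe_add, ← EReal.coe_add, EReal.coe_le_coe_iff] at hchain
    have hnorm : ‖a • z + (1 - a) • p - y‖ ^ 2
        = a * ‖z - y‖ ^ 2 + (1 - a) * ‖p - y‖ ^ 2 - a * (1 - a) * ‖z - p‖ ^ 2 := by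
      have h := comb_norm_sq' a (z - y) (p - y)
      rw [show a • (z - y) + (1 - a) • (p - y) = a • z + (1 - a) • p - y by module,
        show z - y - (p - y) = z - p by abel] at h
      exact h
    rw [hnorm] at hchain
    have hP : a * (gp + ‖p - y‖ ^ 2 / (2 * τ) + (1 - a) * (‖z - p‖ ^ 2 / (2 * τ)))
        ≤ a * (gz + ‖z - y‖ ^ 2 / (2 * τ)) := by
      ring_nf at hchain ⊢
      linarith [hchain]
    exact (mul_le_mul_iff_right₀ ha).mp hP
  refine le_of_forall_pos_le_add fun ε hε => ?_
  set c := ‖z - p‖ ^ 2 / (2 * τ) with hc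
  have hcnn : 0 ≤ c := by positivity
  set a := min 1 (ε / (c + 1)) with hadef
  have ha : 0 < a := lt_min one_pos (div_pos hε (by linarith))
  have ha1 : a ≤ 1 := min_le_left _ _
  have h := key a ha ha1
  have hac : a * c ≤ ε := by
    have h2 : a ≤ ε / (c + 1) := min_le_right _ _
    calc a * c ≤ (ε / (c + 1)) * c := mul_le_mul_of_nonneg_right h2 hcnn
    _ ≤ ε := by rw [div_mul_eq_mul_div, div_le_iff₀ (by linarith)]; nlinarith
  linarith

end Helpers

/-- under the nonsmooth coherence condition, the prolonged coarse correction
`d = I_H^h(ζ^m − ζ⁰)` satisfies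
`sup_{g ∈ ∂G(x)} ⟨g + ∇F(x), d⟩ ≤ −(ε/(2μτ_H)) Σ_j ‖ζ^{j+1} − ζ^j‖² ≤ 0`. -/
theorem coherent_coarse_correction_descent_direction
    {X XH : Type*} [NormedAddCommGroup X] [InnerProductSpace ℝ X] [CompleteSpace X]
    [NormedAddCommGroup XH] [InnerProductSpace ℝ XH] [CompleteSpace XH]
    (Ih : X →L[ℝ] XH) (IH : XH →L[ℝ] X) (μ : ℝ) (hμ : 0 < μ)
    (hadj : ∀ (u : X) (ζ : XH), ⟪Ih u, ζ⟫ = μ * ⟪u, IH ζ⟫)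
    (F : X → ℝ) (f : X → X) (LF : ℝ)
    (hFconv : ConvexOn ℝ Set.univ F)
    (hgradF : ∀ y, HasGradientAt F (f y) y)
    (hlipF : ∀ y y', ‖f y - f y'‖ ≤ LF * ‖y - y'‖)
    (G : X → EReal) (hG : ProperConvexLsc G)
    (x : X) (hx : (ESubdiff G x).Nonempty)
    (FH : XH → ℝ) (fH : XH → XH) (LH τH : ℝ)
    (hFHconv : ConvexOn ℝ Set.univ FH)
    (hgradFH : ∀ ζ, HasGradientAt FH (fH ζ) ζ)
    (hlipFH : ∀ ζ ζ', ‖fH ζ - fH ζ'‖ ≤ LH * ‖ζ - ζ'‖)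
    (GH : XH → EReal) (hGH : ProperConvexLsc GH)
    (hτ : 0 < τH) (hε : 0 < 2 - τH * LH)
    (m : ℕ) (ζ : ℕ → XH)
    (w : XH) (hw : w = Ih (f x) - fH (ζ 0))
    (hstep : ∀ j < m, IsProx τH GH (ζ j - τH • (fH (ζ j) + w)) (ζ (j + 1)))
    (hcoherence : ∀ g ∈ ESubdiff G x, ∀ ζ' : XH,
      GH (ζ 0) + ((⟪Ih g, ζ' - ζ 0⟫ : ℝ) : EReal) ≤ GH ζ')
    (d : X) (hd : d = IH (ζ m - ζ 0)) :
    (∀ g ∈ ESubdiff G x,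
      ⟪g + f x, d⟫ ≤ -((2 - τH * LH) / (2 * μ * τH)
        * ∑ j ∈ Finset.range m, ‖ζ (j + 1) - ζ j‖ ^ 2))
    ∧ -((2 - τH * LH) / (2 * μ * τH)
        * ∑ j ∈ Finset.range m, ‖ζ (j + 1) - ζ j‖ ^ 2) ≤ 0 := by
  obtain ⟨g0, hg0⟩ := hx
  obtain ⟨ζ', hζ'⟩ := hGH.1
  have hbot := hGH.2.1
  -- finiteness of GH along the iterates
  have hfin0 : ∃ r : ℝ, GH (ζ 0) = (r : EReal) := by
    have h := hcoherence g0 hg0 ζ'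
    have hnt : GH (ζ 0) ≠ ⊤ := by
      intro h0
      rw [h0, EReal.top_add_coe] at h
      exact hζ' (top_le_iff.mp h)
    exact ⟨_, (EReal.coe_toReal hnt (hbot _)).symm⟩
  have hfin : ∀ j, j ≤ m → ∃ r : ℝ, GH (ζ j) = (r : EReal) := by
    intro j
    induction j with
    | zero => exact fun _ => hfin0
    | succ k ih =>
      intro hj
      obtain ⟨r, hr⟩ := ih (by omega)
      have hp := hstep k (by omega) (ζ k)
      rw [hr, ← EReal.coe_add] at hp
      have hnt : GH (ζ (k + 1)) ≠ ⊤ := by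
        intro h0
        rw [h0, EReal.top_add_coe] at hp
        exact EReal.coe_ne_top _ (top_le_iff.mp hp)
      exact ⟨_, (EReal.coe_toReal hnt (hbot _)).symm⟩
  have hgv : ∀ j, j ≤ m → GH (ζ j) = (((GH (ζ j)).toReal : ℝ) : EReal) := by
    intro j hj
    obtain ⟨r, hr⟩ := hfin j hj
    rw [hr, EReal.toReal_coe]
  set gv : ℕ → ℝ := fun j => (GH (ζ j)).toReal with hgvdef
  -- one-step descent
  have hstepR : ∀ j, j < m → FH (ζ (j + 1)) + ⟪w, ζ (j + 1)⟫ + gv (j + 1)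
      + (2 - τH * LH) / (2 * τH) * ‖ζ (j + 1) - ζ j‖ ^ 2
      ≤ FH (ζ j) + ⟪w, ζ j⟫ + gv j := by
    intro j hj
    set p := ζ (j + 1) with hpd
    set q := ζ j with hqd
    set s := fH q + w with hsd
    have hps := prox_strong' hτ hGH.2.2.1 (hstep j hj) (hgv (j + 1) (by omega)) (hgv j (by omega))
    have h1 : ‖p - (q - τH • s)‖ ^ 2
        = ‖p - q‖ ^ 2 + 2 * (τH * ⟪p - q, s⟫) + τH ^ 2 * ‖s‖ ^ 2 := by
      rw [show p - (q - τH • s) = (p - q) + τH • s by module, norm_add_sq_real,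
        real_inner_smul_right, norm_smul, Real.norm_eq_abs, abs_of_pos hτ, mul_pow]
    have h2 : ‖q - (q - τH • s)‖ ^ 2 = τH ^ 2 * ‖s‖ ^ 2 := by
      rw [show q - (q - τH • s) = τH • s by module, norm_smul, Real.norm_eq_abs,
        abs_of_pos hτ, mul_pow]
    have h3 : ‖q - p‖ ^ 2 = ‖p - q‖ ^ 2 := by rw [norm_sub_rev]
    rw [h1, h2, h3] at hps
    -- simplify hps to: gv (j+1) + ‖p-q‖²/τH + ⟪p-q, s⟫ ≤ gv j
    have hps2 : gv (j + 1) + ‖p - q‖ ^ 2 / τH + ⟪p - q, s⟫ ≤ gv j := by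
      have e1 : (‖p - q‖ ^ 2 + 2 * (τH * ⟪p - q, s⟫) + τH ^ 2 * ‖s‖ ^ 2) / (2 * τH)
          = ‖p - q‖ ^ 2 / (2 * τH) + ⟪p - q, s⟫ + τH ^ 2 * ‖s‖ ^ 2 / (2 * τH) := by
        field_simp
      have e2 : ‖p - q‖ ^ 2 / (2 * τH) + ‖p - q‖ ^ 2 / (2 * τH) = ‖p - q‖ ^ 2 / τH := by
        field_simp
        ring
      rw [e1] at hps
      linarith
    have hFHd := descent_lemma' hgradFH hlipFH q p
    have hwin : ⟪w, p - q⟫ = ⟪w, p⟫ - ⟪w, q⟫ := inner_sub_right _ _ _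
    have hsin : ⟪p - q, s⟫ = ⟪p - q, fH q⟫ + ⟪p - q, w⟫ := inner_add_right _ _ _
    have hcom1 : ⟪fH q, p - q⟫ = ⟪p - q, fH q⟫ := real_inner_comm _ _
    have hcom2 : ⟪w, p - q⟫ = ⟪p - q, w⟫ := real_inner_comm _ _
    have hid : (2 - τH * LH) / (2 * τH) * ‖p - q‖ ^ 2
        = ‖p - q‖ ^ 2 / τH - LH / 2 * ‖p - q‖ ^ 2 := by
      field_simp
    rw [hid]
    linarith [hps2, hFHd]
  -- telescoping
  have htel : ∀ k, k ≤ m → FH (ζ k) + ⟪w, ζ k⟫ + gv k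
      + (2 - τH * LH) / (2 * τH) * ∑ j ∈ Finset.range k, ‖ζ (j + 1) - ζ j‖ ^ 2
      ≤ FH (ζ 0) + ⟪w, ζ 0⟫ + gv 0 := by
    intro k
    induction k with
    | zero => intro _; simp
    | succ n ih =>
      intro hk
      have h1 := ih (by omega)
      have h2 := hstepR n (by omega)
      rw [Finset.sum_range_succ, mul_add]
      linarith
  set S := ∑ j ∈ Finset.range m, ‖ζ (j + 1) - ζ j‖ ^ 2 with hSdef
  have hS : 0 ≤ S := Finset.sum_nonneg fun i _ => sq_nonneg _
  constructor
  · intro g hg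
    have hFHlow := grad_ineq' hFHconv hgradFH (ζ 0) (ζ m)
    have hGHlow : gv 0 + ⟪Ih g, ζ m - ζ 0⟫ ≤ gv m := by
      have h := hcoherence g hg (ζ m)
      rw [hgv 0 (by omega), hgv m le_rfl, ← EReal.coe_add, EReal.coe_le_coe_iff] at h
      exact h
    have hwlow : ⟪w, ζ m - ζ 0⟫ = ⟪w, ζ m⟫ - ⟪w, ζ 0⟫ := inner_sub_right _ _ _
    have hmain := htel m le_rfl
    have hkey : ⟪Ih (g + f x), ζ m - ζ 0⟫ ≤ -((2 - τH * LH) / (2 * τH) * S) := by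
      have hie : Ih (g + f x) = Ih g + (fH (ζ 0) + w) := by
        rw [map_add, hw]; abel
      rw [hie, inner_add_left, inner_add_left]
      linarith
    have hfin2 : μ * ⟪g + f x, d⟫ ≤ -((2 - τH * LH) / (2 * τH) * S) := by
      rw [hd, ← hadj]
      exact hkey
    have hCC : μ * ((2 - τH * LH) / (2 * μ * τH) * S) = (2 - τH * LH) / (2 * τH) * S := by
      field_simp
    have h5 : μ * ⟪g + f x, d⟫ ≤ μ * -((2 - τH * LH) / (2 * μ * τH) * S) := by
      rw [mul_neg, hCC]
      exact hfin2
    exact (mul_le_mul_iff_right₀ hμ).mp h5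
  · have h0 : 0 ≤ (2 - τH * LH) / (2 * μ * τH) * S :=
      mul_nonneg (div_nonneg (by linarith) (by positivity)) hS
    linarith
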